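/- Detailed balance of the Swendsen–Wang move through a fixed edge configuration: for every edge configuration w and all spin configurations s and t on a finite simple graph G, W_V(s) · P(s,w) · Q(w,t) = W_V(t) · P(t,w) · Q(w,s). -/

import Mathlib

open Classical

noncomputable section

variable {V : Type*} [Fintype V] [DecidableEq V]

/-- Product `s i * s j` of spins over an unordered edge `{i, j}`. -/
def pairProd (s : V → ℝ) : Sym2 V → ℝ :=
  Sym2.lift ⟨fun i j => s i * s j, fun _ _ => mul_comm _ _⟩

/-- Unnormalized Gibbs weight
`W_V(s) = exp (β Σ_{{i,j} ∈ E} s_i s_j + β Σ_i h_i s_i)`. -/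
def WV (G : SimpleGraph V) [DecidableRel G.Adj] (β : ℝ) (h : V → ℝ) (s : V → ℝ) : ℝ :=
  Real.exp (β * ∑ e ∈ G.edgeFinset, pairProd s e + β * ∑ i : V, h i * s i)

/-- Edge factor of the joint vertex-edge weight:
`(1 - e^{-2β})` if `w_{ij} = 1` and `s_i = s_j`, `e^{-2β}` if `w_{ij} = 0`, else `0`. -/
def edgeFactorVE (β : ℝ) (s : V → ℝ) (b : Bool) : Sym2 V → ℝ :=
  Sym2.lift ⟨fun i j =>
    if b then (if s i = s j then 1 - Real.exp (-2 * β) else 0) else Real.exp (-2 * β),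
    by intro i j; by_cases hb : b <;> simp [hb, eq_comm]⟩

/-- Unnormalized joint vertex-edge weight `W_VE(s, w)`. -/
def WVE (G : SimpleGraph V) [DecidableRel G.Adj] (β : ℝ) (h : V → ℝ) (s : V → ℝ)
    (w : G.edgeSet → Bool) : ℝ :=
  (∏ e : G.edgeSet, edgeFactorVE β s (w e) e.val) * Real.exp (β * ∑ i : V, h i * s i)

/-- Edge factor of the Swendsen-Wang edge-step probability: if `s_i = s_j` then
`(1 - e^{-2β})` for `w_{ij} = 1` and `e^{-2β}` for `w_{ij} = 0`; otherwise `0` for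
`w_{ij} = 1` and `1` for `w_{ij} = 0`. -/
def edgeFactorP (β : ℝ) (s : V → ℝ) (b : Bool) : Sym2 V → ℝ :=
  Sym2.lift ⟨fun i j =>
    if s i = s j then (if b then 1 - Real.exp (-2 * β) else Real.exp (-2 * β))
    else (if b then 0 else 1),
    by intro i j; simp [eq_comm]⟩

/-- Swendsen-Wang edge-step probability `P(s, w)`. -/
def swP (G : SimpleGraph V) [DecidableRel G.Adj] (β : ℝ) (s : V → ℝ)
    (w : G.edgeSet → Bool) : ℝ :=
  ∏ e : G.edgeSet, edgeFactorP β s (w e) e.val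

/-- Spanning subgraph of `G` whose edges are the edges `e` with `w e = 1`. -/
def openSubgraph (G : SimpleGraph V) [DecidableRel G.Adj] (w : G.edgeSet → Bool) :
    SimpleGraph V where
  Adj i j := ∃ hij : G.Adj i j, w ⟨Sym2.mk i j, G.mem_edgeSet.mpr hij⟩ = true
  symm := by
    constructor
    rintro i j ⟨hij, hw⟩
    refine ⟨hij.symm, ?_⟩
    have he : (⟨Sym2.mk j i, G.mem_edgeSet.mpr hij.symm⟩ : G.edgeSet)
        = ⟨Sym2.mk i j, G.mem_edgeSet.mpr hij⟩ := Subtype.ext (Sym2.eq_swap)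
    rw [he]; exact hw
  loopless := by constructor; rintro i ⟨hij, -⟩; exact G.loopless.irrefl i hij

/-- `h_γ = Σ_{i ∈ γ} h_i`: sum of the field over a connected component `γ ∈ C_w`. -/
def hComp (G : SimpleGraph V) [DecidableRel G.Adj] (h : V → ℝ) (w : G.edgeSet → Bool)
    (γ : (openSubgraph G w).ConnectedComponent) : ℝ :=
  ∑ i ∈ Finset.univ.filter (fun i => (openSubgraph G w).connectedComponentMk i = γ), h i

/-- A configuration is compatible with the edge configuration `w` if it is constant on each
connected component of the subgraph of open edges. -/
def Compatible (G : SimpleGraph V) [DecidableRel G.Adj] (w : G.edgeSet → Bool)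
    (t : V → ℝ) : Prop :=
  ∀ i j : V, (openSubgraph G w).connectedComponentMk i = (openSubgraph G w).connectedComponentMk j
    → t i = t j

/-- Swendsen-Wang spin-step probability `Q(w, t)`: for `t` compatible with `w`, the product
over components `γ ∈ C_w` of `e^{β h_γ τ_γ} / (e^{β h_γ} + e^{-β h_γ})`, where
`τ_γ = t γ.out` is the common value of `t` on `γ`; and `0` for incompatible `t`. -/
def swQ (G : SimpleGraph V) [DecidableRel G.Adj] (β : ℝ) (h : V → ℝ) (w : G.edgeSet → Bool)
    (t : V → ℝ) : ℝ :=
  if Compatible G w t then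
    ∏ γ : (openSubgraph G w).ConnectedComponent,
      Real.exp (β * hComp G h w γ * t γ.out) /
        (Real.exp (β * hComp G h w γ) + Real.exp (-(β * hComp G h w γ)))
  else 0

/-- Unnormalized edge weight
`W_E(w) = Π_{w_e = 1} (1 - e^{-2β}) · Π_{w_e = 0} e^{-2β} · Π_{γ ∈ C_w} (e^{β h_γ} + e^{-β h_γ})`. -/
def WE (G : SimpleGraph V) [DecidableRel G.Adj] (β : ℝ) (h : V → ℝ)
    (w : G.edgeSet → Bool) : ℝ :=
  (∏ _e ∈ Finset.univ.filter (fun e : G.edgeSet => w e = true), (1 - Real.exp (-2 * β))) *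
  (∏ _e ∈ Finset.univ.filter (fun e : G.edgeSet => w e = false), Real.exp (-2 * β)) *
  ∏ γ : (openSubgraph G w).ConnectedComponent,
    (Real.exp (β * hComp G h w γ) + Real.exp (-(β * hComp G h w γ)))


section Aux

variable {V : Type*} [Fintype V] [DecidableEq V]

lemma compat_of_adj_eq (G : SimpleGraph V) [DecidableRel G.Adj] (w : G.edgeSet → Bool)
    (t : V → ℝ) (hadj : ∀ u v, (openSubgraph G w).Adj u v → t u = t v) :
    Compatible G w t := by
  intro i j hij
  obtain ⟨p⟩ := SimpleGraph.ConnectedComponent.exact hij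
  clear hij
  induction p with
  | nil => rfl
  | cons h p ih => exact (hadj _ _ h).trans ih

lemma mk_out_eq (G : SimpleGraph V) [DecidableRel G.Adj] (w : G.edgeSet → Bool)
    (γ : (openSubgraph G w).ConnectedComponent) :
    (openSubgraph G w).connectedComponentMk γ.out = γ := γ.out_eq

/-- Pointwise identity between the weighted P-factor and the VE-factor. -/
lemma factor_identity (β : ℝ) (s : V → ℝ) (b : Bool) (i j : V)
    (hi : s i = 1 ∨ s i = -1) (hj : s j = 1 ∨ s j = -1) :
    Real.exp (β * (pairProd s (Sym2.mk i j))) * edgeFactorP β s b (Sym2.mk i j)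
      = Real.exp β * edgeFactorVE β s b (Sym2.mk i j) := by
  have hP : edgeFactorP β s b (Sym2.mk i j) =
      if s i = s j then (if b then 1 - Real.exp (-2 * β) else Real.exp (-2 * β))
      else (if b then 0 else 1) := rfl
  have hVE : edgeFactorVE β s b (Sym2.mk i j) =
      if b then (if s i = s j then 1 - Real.exp (-2 * β) else 0) else Real.exp (-2 * β) := rfl
  have hpp : pairProd s (Sym2.mk i j) = s i * s j := rfl
  rw [hP, hVE, hpp]
  rcases hi with hi | hi <;> rcases hj with hj | hj <;>
    cases b <;> simp [hi, hj, ← Real.exp_add] <;> ring_nf <;>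
    norm_num [← Real.exp_add] <;> ring_nf

lemma WV_mul_swP (G : SimpleGraph V) [DecidableRel G.Adj] (β : ℝ) (h : V → ℝ)
    (s : V → ℝ) (w : G.edgeSet → Bool) (hs : ∀ i, s i = 1 ∨ s i = -1) :
    WV G β h s * swP G β s w
      = Real.exp β ^ Fintype.card G.edgeSet * WVE G β h s w := by
  unfold WV swP WVE
  have hsum : ∑ e ∈ G.edgeFinset, pairProd s e = ∑ e : G.edgeSet, pairProd s e.val := by
    rw [SimpleGraph.edgeFinset, ← Finset.sum_set_coe]
  rw [Real.exp_add, hsum, Finset.mul_sum, Real.exp_sum]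
  have key : (∏ e : G.edgeSet, Real.exp (β * pairProd s e.val)) *
      (∏ e : G.edgeSet, edgeFactorP β s (w e) e.val)
      = ∏ e : G.edgeSet, Real.exp β * edgeFactorVE β s (w e) e.val := by
    rw [← Finset.prod_mul_distrib]
    refine Finset.prod_congr rfl fun e _ => ?_
    obtain ⟨e, he⟩ := e
    induction e with
    | _ i j => exact factor_identity β s _ i j (hs i) (hs j)
  rw [Finset.prod_mul_distrib, Finset.prod_const, Finset.card_univ] at key
  rw [mul_right_comm, key]; ring

lemma WVE_incompat (G : SimpleGraph V) [DecidableRel G.Adj] (β : ℝ) (h : V → ℝ)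
    (s : V → ℝ) (w : G.edgeSet → Bool) (hcs : ¬ Compatible G w s) :
    WVE G β h s w = 0 := by
  have : ¬ ∀ u v, (openSubgraph G w).Adj u v → s u = s v := by
    intro hall; exact hcs (compat_of_adj_eq G w s hall)
  push_neg at this
  obtain ⟨u, v, ⟨hG, hw⟩, hne⟩ := this
  unfold WVE
  have hz : edgeFactorVE β s (w ⟨Sym2.mk u v, G.mem_edgeSet.mpr hG⟩) (Sym2.mk u v) = 0 := by
    rw [hw]
    show (if s u = s v then 1 - Real.exp (-2 * β) else 0) = 0
    simp [hne]
  rw [Finset.prod_eq_zero (Finset.mem_univ (⟨Sym2.mk u v, G.mem_edgeSet.mpr hG⟩ : G.edgeSet))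
    hz, zero_mul]

lemma WVE_compat (G : SimpleGraph V) [DecidableRel G.Adj] (β : ℝ) (h : V → ℝ)
    (s : V → ℝ) (w : G.edgeSet → Bool) (hcs : Compatible G w s) :
    WVE G β h s w =
      ((∏ _e ∈ Finset.univ.filter (fun e : G.edgeSet => w e = true), (1 - Real.exp (-2 * β))) *
       (∏ _e ∈ Finset.univ.filter (fun e : G.edgeSet => w e = false), Real.exp (-2 * β))) *
      ∏ γ : (openSubgraph G w).ConnectedComponent,
        Real.exp (β * hComp G h w γ * s γ.out) := by
  unfold WVE
  congr 1
  · rw [← Finset.prod_filter_mul_prod_filter_not Finset.univ (fun e : G.edgeSet => w e = true)]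
    congr 1
    · refine Finset.prod_congr rfl fun e he => ?_
      rw [Finset.mem_filter] at he
      obtain ⟨e, heE⟩ := e
      rw [he.2]
      revert heE he
      induction e with
      | _ i j =>
        intro heE he
        have hij : (openSubgraph G w).Adj i j := ⟨G.mem_edgeSet.mp heE, he.2⟩
        have := hcs i j (SimpleGraph.ConnectedComponent.sound hij.reachable)
        show (if s i = s j then 1 - Real.exp (-2 * β) else 0) = _
        simp [this]
    · refine Finset.prod_congr (by simp [Bool.not_eq_true]) fun e he => ?_
      rw [Finset.mem_filter] at he
      obtain ⟨e, heE⟩ := e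
      rw [he.2]
      revert heE he
      induction e with
      | _ i j => intro _ _; rfl
  · rw [← Real.exp_sum]
    congr 1
    have hpart : ∑ γ : (openSubgraph G w).ConnectedComponent,
        ∑ i ∈ Finset.univ.filter
          (fun i => (openSubgraph G w).connectedComponentMk i = γ), h i * s i
        = ∑ i : V, h i * s i :=
      Finset.sum_fiberwise_of_maps_to (fun i _ => Finset.mem_univ _) _
    rw [← hpart, Finset.mul_sum]
    refine Finset.sum_congr rfl fun γ _ => ?_
    rw [hComp, Finset.mul_sum, Finset.mul_sum, Finset.sum_mul]
    refine Finset.sum_congr rfl fun i hi => ?_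
    rw [Finset.mem_filter] at hi
    rw [hcs i γ.out (by rw [hi.2, mk_out_eq])]
    ring

lemma WVE_mul_swQ_symm (G : SimpleGraph V) [DecidableRel G.Adj] (β : ℝ) (h : V → ℝ)
    (w : G.edgeSet → Bool) (s t : V → ℝ) :
    WVE G β h s w * swQ G β h w t = WVE G β h t w * swQ G β h w s := by
  by_cases hcs : Compatible G w s
  · by_cases hct : Compatible G w t
    · rw [WVE_compat G β h s w hcs, WVE_compat G β h t w hct,
        swQ, if_pos hct, swQ, if_pos hcs, Finset.prod_div_distrib,
        Finset.prod_div_distrib]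
      ring
    · rw [WVE_incompat G β h t w hct, zero_mul, swQ, if_neg hct, mul_zero]
  · rw [WVE_incompat G β h s w hcs, zero_mul, eq_comm, swQ, if_neg hcs, mul_zero]

end Aux

/-- Detailed balance of the Swendsen-Wang move through a fixed edge
configuration `w`: `W_V(s) · P(s, w) · Q(w, t) = W_V(t) · P(t, w) · Q(w, s)` for all spin
configurations `s`, `t`. -/
theorem swendsenWang_detailed_balance_via_edgeConfig (G : SimpleGraph V) [DecidableRel G.Adj]
    (β : ℝ) (hβ : 0 < β) (h : V → ℝ) (w : G.edgeSet → Bool) (s t : V → ℝ)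
    (hs : ∀ i, s i = 1 ∨ s i = -1) (ht : ∀ i, t i = 1 ∨ t i = -1) :
    WV G β h s * swP G β s w * swQ G β h w t
      = WV G β h t * swP G β t w * swQ G β h w s := by
  rw [WV_mul_swP G β h s w hs, WV_mul_swP G β h t w ht]
  have := WVE_mul_swQ_symm G β h w s t
  linear_combination Real.exp β ^ Fintype.card G.edgeSet * this

end
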